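/- Under the hypotheses of the previous setting (Hopf algebra H with multiplicative matrix v preserving the nondegenerate bilinear form b), the antipode is given by S(v^σ_ν) = Σ_{λ,μ} b^{σλ} v^μ_λ b_{μν} for all σ, ν. -/
import Mathlib


open TensorProduct

/-- For a Hopf algebra `H` with multiplicative matrix `v` preserving a
nondegenerate bilinear form `b`, the antipode is `S(v^σ_ν) = Σ b^{σλ} v^μ_λ b_{μν}`. -/
theorem stmt_11 {K H : Type*} [Field K] [Ring H] [HopfAlgebra K H]
    {n : ℕ} (hn : 2 ≤ n)
    (B B' : Matrix (Fin n) (Fin n) K) (hBB' : B * B' = 1) (hB'B : B' * B = 1)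
    (v : Fin n → Fin n → H)
    (hcomul : ∀ μ ν : Fin n,
      Coalgebra.comul (R := K) (v μ ν) = ∑ lam : Fin n, v μ lam ⊗ₜ[K] v lam ν)
    (hcounit : ∀ μ ν : Fin n,
      Coalgebra.counit (R := K) (v μ ν) = if μ = ν then (1 : K) else 0)
    (hpres : ∀ lam ρ : Fin n,
      ∑ μ : Fin n, ∑ ν : Fin n, B μ ν • (v μ lam * v ν ρ) = B lam ρ • (1 : H)) :
    ∀ σ ν : Fin n,
      HopfAlgebra.antipode (R := K) (v σ ν)
        = ∑ lam : Fin n, ∑ μ : Fin n, (B' σ lam * B μ ν) • v μ lam := by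
  -- abbreviation for the candidate inverse matrix
  set w : Fin n → Fin n → H :=
    fun σ ν => ∑ lam : Fin n, ∑ μ : Fin n, (B' σ lam * B μ ν) • v μ lam with hw_def
  -- Step 2: S is a right convolution inverse of v:
  have hSr : ∀ lam ν : Fin n,
      ∑ ρ : Fin n, v lam ρ * HopfAlgebra.antipode (R := K) (v ρ ν)
        = if lam = ν then (1 : H) else 0 := by
    intro lam ν
    have h := HopfAlgebra.mul_antipode_lTensor_comul_apply (R := K) (a := v lam ν)
    rw [hcomul, hcounit] at h
    simp only [map_sum, LinearMap.lTensor_tmul, LinearMap.mul'_apply] at h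
    rw [h]
    split <;> simp
  -- Step 1: w is a left inverse of the matrix v:
  have hwl : ∀ σ ρ : Fin n,
      ∑ lam : Fin n, w σ lam * v lam ρ = if σ = ρ then (1 : H) else 0 := by
    intro σ ρ
    have : ∑ lam : Fin n, w σ lam * v lam ρ
        = ∑ lam' : Fin n, B' σ lam' • (∑ μ : Fin n, ∑ lam : Fin n,
            B μ lam • (v μ lam' * v lam ρ)) := by
      simp only [hw_def, Finset.sum_mul, Finset.smul_sum, smul_mul_assoc, mul_smul]
      rw [Finset.sum_comm]
      refine Finset.sum_congr rfl fun lam' _ => ?_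
      rw [Finset.sum_comm]
    rw [this]
    simp only [hpres]
    have : ∑ lam' : Fin n, B' σ lam' • (B lam' ρ • (1 : H))
        = ((B' * B) σ ρ) • (1 : H) := by
      simp [Matrix.mul_apply, smul_smul, Finset.sum_smul]
    rw [this, hB'B]
    by_cases h : σ = ρ <;> simp [Matrix.one_apply, h]
  intro σ ν
  -- Step 3: combine
  calc HopfAlgebra.antipode (R := K) (v σ ν)
      = ∑ ρ : Fin n, (if σ = ρ then (1 : H) else 0) * HopfAlgebra.antipode (R := K) (v ρ ν) := by
        simp
    _ = ∑ ρ : Fin n, (∑ lam : Fin n, w σ lam * v lam ρ) * HopfAlgebra.antipode (R := K) (v ρ ν) := by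
        simp only [hwl]
    _ = ∑ lam : Fin n, w σ lam * (∑ ρ : Fin n, v lam ρ * HopfAlgebra.antipode (R := K) (v ρ ν)) := by
        simp only [Finset.sum_mul, Finset.mul_sum, mul_assoc]
        rw [Finset.sum_comm]
    _ = ∑ lam : Fin n, w σ lam * (if lam = ν then (1 : H) else 0) := by
        simp only [hSr]
    _ = w σ ν := by simp
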